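/- For every integer n ≥ 2 there exist constants A > 0 and r_* ∈ (0,1) such that for every δ with |δ| ≤ 1/2 and every sufficiently small ε > 0 there exists t_* > 0 with the following property. Set a = (1−δ)(n−1)/4, Λ(r) = 1/(−log r), Γ(r) = F[aΛ](r), and v⁻(r,t) = aΛ(r) + (1−ε)·t·Γ(r). Then ∂_t v⁻(r,t) ≤ F[v⁻(·,t)](r) for all (r,t) with (A/√ε)·√t ≤ r ≤ r_* and 0 < t < t_*. -/

import Mathlib

open Real Set Filter Topology

/-- The quasilinear operator `F[v](r) = v v'' - (1/2)(v')² + ((n-1-v)/r) v' + (2(n-1)/r²) v (1-v)`. -/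
noncomputable def Fop (n : ℕ) (v : ℝ → ℝ) (r : ℝ) : ℝ :=
  v r * deriv (deriv v) r - (1/2) * (deriv v r)^2
    + (((n : ℝ) - 1 - v r) / r) * deriv v r
    + (2 * ((n : ℝ) - 1) / r^2) * v r * (1 - v r)

/-- `Λ(r) = 1/(-log r)`. -/
noncomputable def Lam (r : ℝ) : ℝ := 1 / (-Real.log r)

/-- The outer-region barrier `v(r,t) = a Λ(r) + b t Γ(r)`, where `Γ = F[aΛ]`. -/
noncomputable def vOuter (n : ℕ) (a b : ℝ) (r t : ℝ) : ℝ :=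
  a * Lam r + b * t * Fop n (fun ρ => a * Lam ρ) r

set_option linter.unusedSectionVars false

namespace Aux2

noncomputable def Pf (m a x : ℝ) : ℝ :=
  2*m*a*x + (m*a - 2*m*a^2)*x^2 - 2*a^2*x^3 + 3/2*a^2*x^4
noncomputable def Pd (m a x : ℝ) : ℝ :=
  2*m*a + 2*(m*a - 2*m*a^2)*x - 6*a^2*x^2 + 6*a^2*x^3
noncomputable def Pdd (m a x : ℝ) : ℝ :=
  2*(m*a - 2*m*a^2) - 12*a^2*x + 18*a^2*x^2
noncomputable def B1f (m a x : ℝ) : ℝ := x^2 * Pd m a x - 2 * Pf m a x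
noncomputable def B1d (m a x : ℝ) : ℝ := 2*x*Pd m a x + x^2 * Pdd m a x - 2*Pd m a x
noncomputable def B2f (m a x : ℝ) : ℝ := x^2 * B1d m a x - 3 * B1f m a x

noncomputable def Btil (m a x : ℝ) : ℝ :=
  a*x*B2f m a x + Pf m a x * (a*(2*x^3 - x^2)) - a*x^2*B1f m a x
    + (m - a*x)*B1f m a x - Pf m a x * a * x^2 + 2*m*(Pf m a x - 2*a*x*Pf m a x)
noncomputable def Qtil (m a x : ℝ) : ℝ :=
  Pf m a x * B2f m a x - 1/2 * (B1f m a x)^2 - Pf m a x * B1f m a x - 2*m*(Pf m a x)^2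

lemma hasDerivAt_Pf (m a x : ℝ) : HasDerivAt (fun x => Pf m a x) (Pd m a x) x := by
  have h1 : HasDerivAt (fun x : ℝ => 2*m*a*x) (2*m*a) x := by
    simpa using (hasDerivAt_id x).const_mul (2*m*a)
  have h2 : HasDerivAt (fun x : ℝ => (m*a - 2*m*a^2)*x^2) ((m*a - 2*m*a^2)*(2*x)) x := by
    simpa using (hasDerivAt_pow 2 x).const_mul (m*a - 2*m*a^2)
  have h3 : HasDerivAt (fun x : ℝ => 2*a^2*x^3) (2*a^2*(3*x^2)) x := by
    simpa using (hasDerivAt_pow 3 x).const_mul (2*a^2)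
  have h4 : HasDerivAt (fun x : ℝ => 3/2*a^2*x^4) (3/2*a^2*(4*x^3)) x := by
    simpa using (hasDerivAt_pow 4 x).const_mul (3/2*a^2)
  have := ((h1.add h2).sub h3).add h4
  refine this.congr_deriv ?_; symm
  simp [Pd]; ring

lemma hasDerivAt_B1f (m a x : ℝ) : HasDerivAt (fun x => B1f m a x) (B1d m a x) x := by
  have hPd : HasDerivAt (fun x => Pd m a x) (Pdd m a x) x := by
    have h1 : HasDerivAt (fun x : ℝ => 2*(m*a - 2*m*a^2)*x) (2*(m*a - 2*m*a^2)) x := by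
      simpa using (hasDerivAt_id x).const_mul (2*(m*a - 2*m*a^2))
    have h2 : HasDerivAt (fun x : ℝ => 6*a^2*x^2) (6*a^2*(2*x)) x := by
      simpa using (hasDerivAt_pow 2 x).const_mul (6*a^2)
    have h3 : HasDerivAt (fun x : ℝ => 6*a^2*x^3) (6*a^2*(3*x^2)) x := by
      simpa using (hasDerivAt_pow 3 x).const_mul (6*a^2)
    have := (((hasDerivAt_const x (2*m*a)).add h1).sub h2).add h3
    refine this.congr_deriv ?_; symm
    simp only [Pdd]
    ring
  have h := ((hasDerivAt_pow 2 x).mul hPd).sub ((hasDerivAt_Pf m a x).const_mul 2)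
  refine h.congr_deriv ?_; symm
  simp only [B1d]; push_cast; ring

lemma lam_pos {r : ℝ} (h0 : 0 < r) (h1 : r < 1) : 0 < Lam r := by
  have : Real.log r < 0 := Real.log_neg h0 h1
  have : 0 < -Real.log r := by linarith
  simp only [Lam]
  positivity

lemma hasDerivAt_lam {r : ℝ} (h0 : 0 < r) (h1 : r < 1) :
    HasDerivAt Lam ((Lam r)^2 / r) r := by
  have hlog : Real.log r < 0 := Real.log_neg h0 h1
  have hne : -Real.log r ≠ 0 := by linarith
  have h := ((Real.hasDerivAt_log h0.ne').neg).inv hne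
  have heq : Lam = fun r => (-Real.log r)⁻¹ := by
    funext y; simp [Lam, one_div]
  rw [heq]
  refine h.congr_deriv ?_; symm
  simp only [heq, Pi.neg_apply]
  field_simp


lemma hasDerivAt_polyLam (p pd : ℝ → ℝ) {r : ℝ}
    (hp : HasDerivAt p (pd (Lam r)) (Lam r)) (k : ℕ)
    (h0 : 0 < r) (h1 : r < 1) :
    HasDerivAt (fun ρ => p (Lam ρ) / ρ^k)
      (((Lam r)^2 * pd (Lam r) - (k : ℝ) * p (Lam r)) / r^(k+1)) r := by
  have hA : HasDerivAt (fun ρ => p (Lam ρ)) (pd (Lam r) * ((Lam r)^2 / r)) r :=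
    hp.comp r (hasDerivAt_lam h0 h1)
  have hB : HasDerivAt (fun ρ : ℝ => ρ^k) ((k:ℝ) * r^(k-1)) r := hasDerivAt_pow k r
  have hne : r^k ≠ 0 := pow_ne_zero _ h0.ne'
  have h := hA.div hB hne
  refine h.congr_deriv ?_; symm
  rcases Nat.eq_zero_or_pos k with hk | hk
  · subst hk; simp; field_simp
  · obtain ⟨j, rfl⟩ : ∃ j, k = j + 1 := ⟨k - 1, by omega⟩
    have hj : r ^ j ≠ 0 := pow_ne_zero _ h0.ne'
    simp only [Nat.add_sub_cancel]
    rw [show j + 1 + 1 = j + 2 from rfl, pow_succ, pow_succ, pow_succ]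
    push_cast
    field_simp
    ring

variable {a b t : ℝ} {n : ℕ}

lemma deriv_aLam {r : ℝ} (h0 : 0 < r) (h1 : r < 1) :
    deriv (fun ρ => a * Lam ρ) r = a * (Lam r)^2 / r := by
  have := ((hasDerivAt_lam h0 h1).const_mul a).deriv
  rw [this]; ring

lemma deriv2_aLam {r : ℝ} (h0 : 0 < r) (h1 : r < 1) :
    deriv (deriv (fun ρ => a * Lam ρ)) r
      = (2*a*(Lam r)^3 - a*(Lam r)^2) / r^2 := by
  have hev : deriv (fun ρ => a * Lam ρ) =ᶠ[𝓝 r] (fun ρ => (a * (Lam ρ)^2) / ρ^1) := by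
    filter_upwards [Ioo_mem_nhds h0 h1] with s hs
    rw [deriv_aLam hs.1 hs.2]; ring
  rw [hev.deriv_eq]
  have hp : HasDerivAt (fun x : ℝ => a * x^2) ((fun x => a*(2*x)) (Lam r)) (Lam r) := by
    simpa using (hasDerivAt_pow 2 (Lam r)).const_mul a
  have := (hasDerivAt_polyLam (fun x => a * x^2) (fun x => a*(2*x)) hp 1 h0 h1).deriv
  rw [this]; ring

lemma gamma_eq {r : ℝ} (h0 : 0 < r) (h1 : r < 1) :
    Fop n (fun ρ => a * Lam ρ) r = Pf ((n:ℝ)-1) a (Lam r) / r^2 := by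
  rw [Fop, deriv_aLam h0 h1, deriv2_aLam h0 h1]
  simp only [Pf]
  field_simp
  ring

lemma vOuter_eq {r : ℝ} (h0 : 0 < r) (h1 : r < 1) :
    vOuter n a b r t
      = a * Lam r + (b*t) * (Pf ((n:ℝ)-1) a (Lam r) / r^2) := by
  rw [vOuter, gamma_eq h0 h1]

lemma hasDerivAt_Vexp (m a c : ℝ) {r : ℝ} (h0 : 0 < r) (h1 : r < 1) :
    HasDerivAt (fun ρ => a * Lam ρ + c * (Pf m a (Lam ρ) / ρ^2))
      ((a * (Lam r)^2) / r^1 + c * (B1f m a (Lam r) / r^3)) r := by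
  have h2 := ((hasDerivAt_polyLam (fun x => Pf m a x) (fun x => Pd m a x)
      (hasDerivAt_Pf m a (Lam r)) 2 h0 h1)).const_mul c
  have h1' := (hasDerivAt_lam h0 h1).const_mul a
  have := h1'.add h2
  refine this.congr_deriv ?_; symm
  simp only [B1f]
  field_simp
  try ring

lemma hasDerivAt_V1exp (m a c : ℝ) {r : ℝ} (h0 : 0 < r) (h1 : r < 1) :
    HasDerivAt (fun ρ => (a * (Lam ρ)^2) / ρ^1 + c * (B1f m a (Lam ρ) / ρ^3))
      ((2*a*(Lam r)^3 - a*(Lam r)^2) / r^2 + c * (B2f m a (Lam r) / r^4)) r := by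
  have hp : HasDerivAt (fun x : ℝ => a * x^2) ((fun x => a*(2*x)) (Lam r)) (Lam r) := by
    simpa using (hasDerivAt_pow 2 (Lam r)).const_mul a
  have hA := hasDerivAt_polyLam (fun x => a * x^2) (fun x => a*(2*x)) hp 1 h0 h1
  have hB := (hasDerivAt_polyLam (fun x => B1f m a x) (fun x => B1d m a x)
      (hasDerivAt_B1f m a (Lam r)) 3 h0 h1).const_mul c
  have := hA.add hB
  refine this.congr_deriv ?_; symm
  simp only [B2f]
  field_simp
  ring

lemma deriv_vOuter {r : ℝ} (h0 : 0 < r) (h1 : r < 1) :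
    deriv (fun ρ => vOuter n a b ρ t) r
      = (a * (Lam r)^2) / r^1 + (b*t) * (B1f ((n:ℝ)-1) a (Lam r) / r^3) := by
  have hev : (fun ρ => vOuter n a b ρ t)
      =ᶠ[𝓝 r] (fun ρ => a * Lam ρ + (b*t) * (Pf ((n:ℝ)-1) a (Lam ρ) / ρ^2)) := by
    filter_upwards [Ioo_mem_nhds h0 h1] with s hs
    exact vOuter_eq hs.1 hs.2
  rw [hev.deriv_eq, (hasDerivAt_Vexp ((n:ℝ)-1) a (b*t) h0 h1).deriv]

lemma deriv2_vOuter {r : ℝ} (h0 : 0 < r) (h1 : r < 1) :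
    deriv (deriv (fun ρ => vOuter n a b ρ t)) r
      = (2*a*(Lam r)^3 - a*(Lam r)^2) / r^2 + (b*t) * (B2f ((n:ℝ)-1) a (Lam r) / r^4) := by
  have hev : deriv (fun ρ => vOuter n a b ρ t)
      =ᶠ[𝓝 r] (fun ρ => (a * (Lam ρ)^2) / ρ^1 + (b*t) * (B1f ((n:ℝ)-1) a (Lam ρ) / ρ^3)) := by
    filter_upwards [Ioo_mem_nhds h0 h1] with s hs
    exact deriv_vOuter hs.1 hs.2
  rw [hev.deriv_eq, (hasDerivAt_V1exp ((n:ℝ)-1) a (b*t) h0 h1).deriv]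

lemma Fop_vOuter {r : ℝ} (h0 : 0 < r) (h1 : r < 1) :
    Fop n (fun ρ => vOuter n a b ρ t) r
      = Pf ((n:ℝ)-1) a (Lam r) / r^2 + (b*t) * (Btil ((n:ℝ)-1) a (Lam r) / r^4)
        + (b*t)^2 * (Qtil ((n:ℝ)-1) a (Lam r) / r^6) := by
  rw [Fop, deriv_vOuter h0 h1, deriv2_vOuter h0 h1, vOuter_eq h0 h1]
  simp only [Btil, Qtil, B2f, B1f, B1d, Pd, Pdd, Pf]
  field_simp
  ring

lemma deriv_vOuter_t (r t : ℝ) :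
    deriv (fun s => vOuter n a b r s) t = b * Fop n (fun ρ => a * Lam ρ) r := by
  have : (fun s => vOuter n a b r s)
      = fun s => a * Lam r + (b * Fop n (fun ρ => a * Lam ρ) r) * s := by
    funext s; rw [vOuter]; ring
  rw [this, deriv_const_add]
  simpa using ((hasDerivAt_id t).const_mul (b * Fop n (fun ρ => a * Lam ρ) r)).deriv



variable {m a x : ℝ}

lemma abs6 (p q r s t u : ℝ) : |p+q-r+s-t+u| ≤ |p|+|q|+|r|+|s|+|t|+|u| := by
  have h1 := abs_add_le (p+q-r+s-t) u
  have h2 := abs_sub (p+q-r+s) t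
  have h3 := abs_add_le (p+q-r) s
  have h4 := abs_sub (p+q) r
  have h5 := abs_add_le p q
  linarith

lemma abs4 (p q r s : ℝ) : |p-q-r-s| ≤ |p|+|q|+|r|+|s| := by
  have h1 := abs_sub (p-q-r) s
  have h2 := abs_sub (p-q) r
  have h3 := abs_sub p q
  linarith

section Bounds
variable (hm : 1 ≤ m) (ha0 : 0 < a) (ham : a ≤ m) (hx0 : 0 ≤ x) (hx1 : x ≤ 1)
include hm ha0 ham hx0 hx1


lemma toolkit : m*a ≤ m^3 ∧ a^2 ≤ m^3 ∧ m*a^2 ≤ m^3 := by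
  have hm0 : (0:ℝ) ≤ m := by linarith
  have hmm : m^2 ≤ m^3 := by nlinarith [mul_nonneg (sq_nonneg m) (sub_nonneg.2 hm)]
  have ha2 : a^2 ≤ m^2 := by nlinarith [mul_le_mul ham ham ha0.le hm0]
  refine ⟨?_, by linarith, ?_⟩
  · nlinarith [mul_le_mul_of_nonneg_left ham hm0]
  · nlinarith [mul_le_mul_of_nonneg_left ha2 hm0]

lemma Pf_bound : |Pf m a x| ≤ 9*m^3*x := by
  obtain ⟨e1, e2, e3⟩ := toolkit hm ha0 ham hx0 hx1
  have hx2 : x^2 ≤ x := by nlinarith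
  have hx3 : x^3 ≤ x := by nlinarith
  have hx4 : x^4 ≤ x := by nlinarith [sq_nonneg (x^2), sq_nonneg x]
  have t1 : m*a*x ≤ m^3*x := by nlinarith
  have t2 : m*a*x^2 ≤ m^3*x := mul_le_mul e1 hx2 (sq_nonneg x) (by positivity)
  have t3 : m*a^2*x^2 ≤ m^3*x := mul_le_mul e3 hx2 (sq_nonneg x) (by positivity)
  have t4 : a^2*x^3 ≤ m^3*x := mul_le_mul e2 hx3 (by positivity) (by positivity)
  have t5 : a^2*x^4 ≤ m^3*x := mul_le_mul e2 hx4 (by positivity) (by positivity)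
  have n1 : 0 ≤ m*a*x := by positivity
  have n2 : 0 ≤ m*a*x^2 := by positivity
  have n3 : 0 ≤ m*a^2*x^2 := by positivity
  have n4 : 0 ≤ a^2*x^3 := by positivity
  have n5 : 0 ≤ a^2*x^4 := by positivity
  rw [abs_le, Pf]; constructor <;> nlinarith

lemma Pd_bound : |Pd m a x| ≤ 20*m^3 := by
  obtain ⟨e1, e2, e3⟩ := toolkit hm ha0 ham hx0 hx1
  have hx2 : x^2 ≤ x := by nlinarith
  have hx3 : x^3 ≤ x := by nlinarith
  have t1 : m*a*x ≤ m^3 := by nlinarith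
  have t2 : m*a^2*x ≤ m^3 := by nlinarith
  have t3 : a^2*x^2 ≤ m^3 := by nlinarith
  have t4 : a^2*x^3 ≤ m^3 := by nlinarith
  have n1 : 0 ≤ m*a*x := by positivity
  have n2 : 0 ≤ m*a^2*x := by positivity
  have n3 : 0 ≤ a^2*x^2 := by positivity
  have n4 : 0 ≤ a^2*x^3 := by positivity
  rw [abs_le, Pd]; constructor <;> nlinarith

lemma Pdd_bound : |Pdd m a x| ≤ 36*m^3 := by
  obtain ⟨e1, e2, e3⟩ := toolkit hm ha0 ham hx0 hx1
  have hx2 : x^2 ≤ x := by nlinarith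
  have t1 : a^2*x ≤ m^3 := by nlinarith
  have t2 : a^2*x^2 ≤ m^3 := by nlinarith
  have n1 : 0 ≤ a^2*x := by positivity
  have n2 : 0 ≤ a^2*x^2 := by positivity
  rw [abs_le, Pdd]; constructor <;> nlinarith

lemma B1f_bound : |B1f m a x| ≤ 38*m^3*x := by
  have hPd := Pd_bound hm ha0 ham hx0 hx1
  have hPf := Pf_bound hm ha0 ham hx0 hx1
  have hx2 : x^2 ≤ x := by nlinarith
  have h1 : x^2 * |Pd m a x| ≤ x * (20*m^3) :=
    mul_le_mul hx2 hPd (abs_nonneg _) hx0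
  calc |B1f m a x| ≤ |x^2 * Pd m a x| + |2 * Pf m a x| := abs_sub _ _
    _ = x^2 * |Pd m a x| + 2 * |Pf m a x| := by
        rw [abs_mul, abs_mul, abs_of_nonneg (sq_nonneg x)]; norm_num
    _ ≤ x * (20*m^3) + 2 * (9*m^3*x) := by linarith
    _ = 38*m^3*x := by ring

lemma B1d_bound : |B1d m a x| ≤ 116*m^3 := by
  have hPd := Pd_bound hm ha0 ham hx0 hx1
  have hPdd := Pdd_bound hm ha0 ham hx0 hx1
  have hx2 : x^2 ≤ 1 := by nlinarith
  have h : |B1d m a x| ≤ |2*x*Pd m a x| + |x^2 * Pdd m a x| + |2*Pd m a x| := by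
    rw [B1d]
    exact (abs_sub _ _).trans (by gcongr; exact abs_add_le _ _)
  have e1 : |2*x*Pd m a x| ≤ 2*(20*m^3) := by
    rw [abs_mul, abs_mul, abs_of_nonneg hx0]
    have h2 : x * |Pd m a x| ≤ 1 * (20*m^3) := mul_le_mul hx1 hPd (abs_nonneg _) zero_le_one
    rw [abs_of_nonneg (by norm_num : (0:ℝ) ≤ 2)]
    nlinarith
  have e2 : |x^2*Pdd m a x| ≤ 36*m^3 := by
    rw [abs_mul, abs_of_nonneg (sq_nonneg x)]
    have h2 : x^2 * |Pdd m a x| ≤ 1 * (36*m^3) := mul_le_mul hx2 hPdd (abs_nonneg _) zero_le_one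
    linarith
  have e3 : |2*Pd m a x| ≤ 2*(20*m^3) := by
    rw [abs_mul, abs_of_nonneg (by norm_num : (0:ℝ) ≤ 2)]; linarith
  linarith

lemma B2f_bound : |B2f m a x| ≤ 230*m^3*x := by
  have hB1d := B1d_bound hm ha0 ham hx0 hx1
  have hB1 := B1f_bound hm ha0 ham hx0 hx1
  have hx2 : x^2 ≤ x := by nlinarith
  have e1 : |x^2*B1d m a x| ≤ x*(116*m^3) := by
    rw [abs_mul, abs_of_nonneg (sq_nonneg x)]
    exact mul_le_mul hx2 hB1d (abs_nonneg _) hx0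
  have e2 : |3*B1f m a x| ≤ 3*(38*m^3*x) := by
    rw [abs_mul, abs_of_nonneg (by norm_num : (0:ℝ) ≤ 3)]; linarith
  calc |B2f m a x| ≤ |x^2 * B1d m a x| + |3 * B1f m a x| := abs_sub _ _
    _ ≤ x*(116*m^3) + 3*(38*m^3*x) := by linarith
    _ = 230*m^3*x := by ring

lemma Btil_bound : |Btil m a x| ≤ 500*m^5*x := by
  have hB2 := B2f_bound hm ha0 ham hx0 hx1
  have hB1 := B1f_bound hm ha0 ham hx0 hx1
  have hPf := Pf_bound hm ha0 ham hx0 hx1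
  have hm0 : (0:ℝ) < m := by linarith
  have hx2 : x^2 ≤ x := by nlinarith
  have hm25 : m^2 ≤ m^5 := by nlinarith [pow_le_pow_right₀ (by linarith : (1:ℝ) ≤ m) (show 2 ≤ 5 by norm_num)]
  have hm35 : m^3 ≤ m^5 := by nlinarith [pow_le_pow_right₀ (by linarith : (1:ℝ) ≤ m) (show 3 ≤ 5 by norm_num)]
  have hm45 : m^4 ≤ m^5 := pow_le_pow_right₀ (by linarith : (1:ℝ) ≤ m) (by norm_num)
  -- term 1 : a*x*B2f
  have e1 : |a*x*B2f m a x| ≤ 230*m^4*x := by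
    rw [abs_mul, abs_mul, abs_of_nonneg ha0.le, abs_of_nonneg hx0]
    calc a * x * |B2f m a x| ≤ a * x * (230*m^3*x) := by
          apply mul_le_mul_of_nonneg_left hB2 (by positivity)
      _ = 230*m^3*a*x^2 := by ring
      _ = 230*m^3*(a*x^2) := by ring
      _ ≤ 230*m^3*(m*x) := by gcongr <;> nlinarith
      _ = 230*m^4*x := by ring
  -- term 2 : Pf * (a*(2x^3 - x^2))
  have e2 : |Pf m a x * (a*(2*x^3 - x^2))| ≤ 27*m^4*x := by
    rw [abs_mul]
    have h23 : |a*(2*x^3 - x^2)| ≤ 3*m := by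
      rw [abs_mul, abs_of_nonneg ha0.le]
      have : |2*x^3 - x^2| ≤ 3 := by
        rw [abs_le]
        constructor <;> nlinarith [pow_le_one₀ hx0 hx1 (n := 3), pow_le_one₀ hx0 hx1 (n := 2), pow_nonneg hx0 3, pow_nonneg hx0 2]
      calc a * |2*x^3 - x^2| ≤ m * 3 := mul_le_mul ham this (abs_nonneg _) hm0.le
        _ = 3*m := by ring
    calc |Pf m a x| * |a*(2*x^3 - x^2)| ≤ (9*m^3*x) * (3*m) :=
          mul_le_mul hPf h23 (abs_nonneg _) (by positivity)
      _ = 27*m^4*x := by ring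
  -- term 3 : a*x^2*B1f
  have e3 : |a*x^2*B1f m a x| ≤ 38*m^4*x := by
    rw [abs_mul, abs_mul, abs_of_nonneg ha0.le, abs_of_nonneg (sq_nonneg x)]
    calc a * x^2 * |B1f m a x| ≤ a * x^2 * (38*m^3*x) :=
          mul_le_mul_of_nonneg_left hB1 (by positivity)
      _ = 38*m^3*(a*x^2)*x := by ring
      _ ≤ 38*m^3*(m*1)*x := by gcongr <;> nlinarith
      _ = 38*m^4*x := by ring
  -- term 4 : (m - a*x)*B1f
  have e4 : |(m - a*x)*B1f m a x| ≤ 76*m^4*x := by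
    rw [abs_mul]
    have h4 : |m - a*x| ≤ 2*m := by
      rw [abs_le]; constructor <;> nlinarith
    calc |m - a*x| * |B1f m a x| ≤ (2*m) * (38*m^3*x) :=
          mul_le_mul h4 hB1 (abs_nonneg _) (by positivity)
      _ = 76*m^4*x := by ring
  -- term 5 : Pf * a * x^2
  have e5 : |Pf m a x * a * x^2| ≤ 9*m^4*x := by
    rw [abs_mul, abs_mul, abs_of_nonneg ha0.le, abs_of_nonneg (sq_nonneg x)]
    calc |Pf m a x| * a * x^2 ≤ (9*m^3*x) * a * x^2 := by
          apply mul_le_mul_of_nonneg_right (mul_le_mul_of_nonneg_right hPf ha0.le) (sq_nonneg x)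
      _ = 9*m^3*(a*x^2)*x := by ring
      _ ≤ 9*m^3*(m*1)*x := by gcongr <;> nlinarith
      _ = 9*m^4*x := by ring
  -- term 6 : 2*m*(Pf - 2*a*x*Pf)
  have e6 : |2*m*(Pf m a x - 2*a*x*Pf m a x)| ≤ 54*m^5*x := by
    rw [abs_mul]
    have h6 : |Pf m a x - 2*a*x*Pf m a x| = |1 - 2*a*x| * |Pf m a x| := by
      rw [← abs_mul]; congr 1; ring
    have h7 : |1 - 2*a*x| ≤ 3*m := by
      rw [abs_le]; constructor <;> nlinarith [mul_le_mul ham hx1 hx0 hm0.le, mul_nonneg ha0.le hx0]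
    have h8 : |2*m| = 2*m := abs_of_nonneg (by positivity)
    rw [h8, h6]
    calc 2*m*(|1 - 2*a*x| * |Pf m a x|) ≤ 2*m*((3*m) * (9*m^3*x)) := by
          apply mul_le_mul_of_nonneg_left _ (by positivity)
          exact mul_le_mul h7 hPf (abs_nonneg _) (by positivity)
      _ = 54*m^5*x := by ring
  have tri : |Btil m a x| ≤ |a*x*B2f m a x| + |Pf m a x * (a*(2*x^3 - x^2))|
      + |a*x^2*B1f m a x| + |(m - a*x)*B1f m a x| + |Pf m a x * a * x^2|
      + |2*m*(Pf m a x - 2*a*x*Pf m a x)| := by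
    rw [Btil]; exact abs6 _ _ _ _ _ _
  calc |Btil m a x| ≤ 230*m^4*x + 27*m^4*x + 38*m^4*x + 76*m^4*x + 9*m^4*x + 54*m^5*x := by linarith
    _ ≤ 500*m^5*x := by
        have h45x : m^4*x ≤ m^5*x := mul_le_mul_of_nonneg_right hm45 hx0
        have : (0:ℝ) ≤ m^5*x := by positivity
        nlinarith

lemma Qtil_bound : |Qtil m a x| ≤ 4000*m^7*x^2 := by
  have hB2 := B2f_bound hm ha0 ham hx0 hx1
  have hB1 := B1f_bound hm ha0 ham hx0 hx1
  have hPf := Pf_bound hm ha0 ham hx0 hx1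
  have hm0 : (0:ℝ) < m := by linarith
  have hm67 : m^6 ≤ m^7 := pow_le_pow_right₀ (by linarith : (1:ℝ) ≤ m) (by norm_num)
  have hx2 : (0:ℝ) ≤ x^2 := sq_nonneg x
  have e1 : |Pf m a x * B2f m a x| ≤ 2070*m^6*x^2 := by
    rw [abs_mul]
    calc |Pf m a x| * |B2f m a x| ≤ (9*m^3*x) * (230*m^3*x) :=
          mul_le_mul hPf hB2 (abs_nonneg _) (by positivity)
      _ = 2070*m^6*x^2 := by ring
  have e2 : |1/2 * (B1f m a x)^2| ≤ 722*m^6*x^2 := by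
    rw [abs_mul, abs_pow]
    have h := pow_le_pow_left₀ (abs_nonneg _) hB1 2
    have : |(1:ℝ)/2| = 1/2 := by norm_num
    rw [this]
    nlinarith [sq_nonneg (B1f m a x)]
  have e3 : |Pf m a x * B1f m a x| ≤ 342*m^6*x^2 := by
    rw [abs_mul]
    calc |Pf m a x| * |B1f m a x| ≤ (9*m^3*x) * (38*m^3*x) :=
          mul_le_mul hPf hB1 (abs_nonneg _) (by positivity)
      _ = 342*m^6*x^2 := by ring
  have e4 : |2*m*(Pf m a x)^2| ≤ 162*m^7*x^2 := by
    rw [abs_mul, abs_pow, abs_of_nonneg (by positivity : (0:ℝ) ≤ 2*m)]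
    have h := pow_le_pow_left₀ (abs_nonneg _) hPf 2
    calc 2*m*|Pf m a x|^2 ≤ 2*m*((9*m^3*x)^2) := by
          apply mul_le_mul_of_nonneg_left h (by positivity)
      _ = 162*m^7*x^2 := by ring
  have tri : |Qtil m a x| ≤ |Pf m a x * B2f m a x| + |1/2 * (B1f m a x)^2|
      + |Pf m a x * B1f m a x| + |2*m*(Pf m a x)^2| := by
    rw [Qtil]; exact abs4 _ _ _ _
  have h67 : m^6*x^2 ≤ m^7*x^2 := mul_le_mul_of_nonneg_right hm67 (sq_nonneg x)
  calc |Qtil m a x| ≤ 2070*m^6*x^2 + 722*m^6*x^2 + 342*m^6*x^2 + 162*m^7*x^2 := by linarith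
    _ ≤ 4000*m^7*x^2 := by nlinarith [sq_nonneg x, pow_pos hm0 7]

omit hx1 in
lemma Pf_lb (ha8 : m/8 ≤ a) (hx56 : x ≤ 1/(56*m)) : m*a*x ≤ Pf m a x := by
  have hm0 : (0:ℝ) < m := by linarith
  have hx1 : x ≤ 1 := by
    have : 1/(56*m) ≤ 1 := by
      rw [div_le_one (by positivity)]; linarith
    linarith
  obtain ⟨e1, e2, e3⟩ := toolkit hm ha0 ham hx0 hx1
  have hx2 : x^2 ≤ x := by nlinarith
  have h1 : m*a*x^2 ≤ m^3*x^2 := mul_le_mul_of_nonneg_right e1 (sq_nonneg x)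
  have h2 : m*a^2*x^2 ≤ m^3*x^2 := mul_le_mul_of_nonneg_right e3 (sq_nonneg x)
  have h3 : a^2*x^3 ≤ m^3*x^2 := by
    have hx3 : x^3 ≤ x^2 := by nlinarith
    calc a^2*x^3 ≤ m^3*x^3 := mul_le_mul_of_nonneg_right e2 (by positivity)
      _ ≤ m^3*x^2 := mul_le_mul_of_nonneg_left hx3 (by positivity)
  have h56 : x*(56*m) ≤ 1 := (le_div_iff₀ (by positivity)).mp hx56
  have h4 : 56*(m^3*x^2) ≤ m^2*x := by
    nlinarith [mul_le_mul_of_nonneg_right h56 (show (0:ℝ) ≤ m^2*x by positivity)]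
  have h5 : m^2*x/8 ≤ m*a*x := by
    nlinarith [mul_le_mul_of_nonneg_right (mul_le_mul_of_nonneg_left ha8 hm0.le) hx0]
  have n0 : (0:ℝ) ≤ a^2*x^4 := by positivity
  have n1 : (0:ℝ) ≤ m*a*x^2 := by positivity
  simp only [Pf]
  nlinarith [sq_nonneg (a*x)]

end Bounds

end Aux2

set_option maxHeartbeats 1000000 in
lemma key_ineq {m a x A ε b t r B Q P : ℝ}
    (hm : 1 ≤ m) (ha0 : 0 < a) (ham : a ≤ m) (ha8 : m/8 ≤ a)
    (hx0 : 0 < x) (hx1 : x ≤ 1)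
    (hA2 : 16000*m^5 ≤ A^2) (hA4 : 128000*m^7 ≤ A^4) (hA0 : 0 < A)
    (hε0 : 0 < ε) (hε1 : ε ≤ 1) (hb : b = 1 - ε)
    (ht0 : 0 < t) (hr0 : 0 < r)
    (htA : A^2*t ≤ ε*r^2)
    (hBl : -(500*m^5*x) ≤ B) (hQl : -(4000*m^7*x^2) ≤ Q)
    (hPlb : m*a*x ≤ P) :
    0 ≤ ε*P*r^4 + (b*t)*B*r^2 + (b*t)^2*Q := by
  have hm0 : (0:ℝ) < m := by linarith
  have hb0 : 0 ≤ b := by rw [hb]; linarith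
  have hb1 : b ≤ 1 := by rw [hb]; linarith
  have hm57 : m^5 ≤ m^7 := pow_le_pow_right₀ hm (by norm_num)
  have hma : m^2/8 ≤ m*a := by nlinarith
  have step1 : -(t*(500*m^5*x)*r^2) ≤ (b*t)*B*r^2 := by
    have h1 := mul_le_mul_of_nonneg_left hBl (show (0:ℝ) ≤ b*t*r^2 by positivity)
    have h2 : 0 ≤ (1-b)*(t*(500*m^5*x)*r^2) :=
      mul_nonneg (by linarith) (by positivity)
    nlinarith
  have hAma : 2000*m^7 ≤ A^2*(m*a) := by
    nlinarith [mul_le_mul hA2 hma (by positivity : (0:ℝ) ≤ m^2/8) (by positivity : (0:ℝ) ≤ A^2)]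
  have step1b : t*(500*m^5*x)*r^2 ≤ ε*(m*a*x)*r^4/4 := by
    have c1 : A^2*t*(m*a*x*r^2) ≤ ε*r^2*(m*a*x*r^2) :=
      mul_le_mul_of_nonneg_right htA (by positivity)
    have c2 : 2000*m^7*(t*x*r^2) ≤ A^2*(m*a)*(t*x*r^2) :=
      mul_le_mul_of_nonneg_right hAma (by positivity)
    have c3 : 2000*m^5*(t*x*r^2) ≤ 2000*m^7*(t*x*r^2) := by
      have := mul_le_mul_of_nonneg_right hm57 (show (0:ℝ) ≤ t*x*r^2 by positivity)
      nlinarith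
    nlinarith
  have step2 : -(t^2*(4000*m^7*x^2)) ≤ (b*t)^2*Q := by
    have h1 := mul_le_mul_of_nonneg_left hQl (show (0:ℝ) ≤ (b*t)^2 by positivity)
    have h2 : (b*t)^2 ≤ t^2 := by
      have hbb : b^2 ≤ 1 := by nlinarith
      nlinarith [mul_le_mul_of_nonneg_right hbb (sq_nonneg t)]
    have h3 : (0:ℝ) ≤ 4000*m^7*x^2 := by positivity
    nlinarith [sq_nonneg (b*t)]
  have hA4ma : 16000*m^7 ≤ A^4*(m*a) := by
    have h9 : m^7 ≤ m^9 := pow_le_pow_right₀ hm (by norm_num)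
    nlinarith [mul_le_mul hA4 hma (by positivity : (0:ℝ) ≤ m^2/8) (by positivity : (0:ℝ) ≤ A^4)]
  have step2b : t^2*(4000*m^7*x^2) ≤ ε*(m*a*x)*r^4/4 := by
    have hsq : A^4*t^2 ≤ ε^2*r^4 := by
      nlinarith [pow_le_pow_left₀ (by positivity : (0:ℝ) ≤ A^2*t) htA 2]
    have c1 : 16000*m^7*x^2*(A^4*t^2) ≤ 16000*m^7*x^2*(ε^2*r^4) :=
      mul_le_mul_of_nonneg_left hsq (by positivity)
    have c2 : 16000*m^7*(x^2*ε^2*r^4) ≤ (A^4*(m*a))*(x^2*ε^2*r^4) :=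
      mul_le_mul_of_nonneg_right hA4ma (by positivity)
    have c3 : x^2*ε^2 ≤ x*ε := by
      have hxe : x*ε ≤ 1 := mul_le_one₀ hx1 hε0.le hε1
      nlinarith [mul_le_mul_of_nonneg_left hxe (mul_nonneg hx0.le hε0.le)]
    have c4 : (A^4*(m*a))*(x^2*ε^2*r^4) ≤ (A^4*(m*a))*(x*ε*r^4) := by
      apply mul_le_mul_of_nonneg_left _ (by positivity)
      exact mul_le_mul_of_nonneg_right c3 (by positivity)
    have final2 : A^4*(t^2*(4000*m^7*x^2)) ≤ A^4*(ε*(m*a*x)*r^4/4) := by nlinarith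
    exact le_of_mul_le_mul_left final2 (by positivity)
  have hP4 : ε*(m*a*x)*r^4 ≤ ε*P*r^4 := by
    have := mul_le_mul_of_nonneg_left hPlb (show (0:ℝ) ≤ ε*r^4 by positivity)
    nlinarith
  have hXpos : (0:ℝ) ≤ ε*(m*a*x)*r^4 := by positivity
  nlinarith [step1, step1b, step2, step2b, hP4]

theorem stmt2 (n : ℕ) (hn : 2 ≤ n) :
    ∃ A > (0:ℝ), ∃ rstar ∈ Ioo (0:ℝ) 1,
      ∀ δ : ℝ, |δ| ≤ 1/2 →
        ∃ ε₀ > (0:ℝ), ∀ ε : ℝ, 0 < ε → ε < ε₀ →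
          ∃ tstar > (0:ℝ),
            ∀ r t : ℝ, A / Real.sqrt ε * Real.sqrt t ≤ r → r ≤ rstar →
              0 < t → t < tstar →
              deriv (fun s => vOuter n ((1 - δ) * ((n:ℝ) - 1) / 4) (1 - ε) r s) t ≤
                Fop n (fun ρ => vOuter n ((1 - δ) * ((n:ℝ) - 1) / 4) (1 - ε) ρ t) r := by
  have hm : (1:ℝ) ≤ (n:ℝ) - 1 := by
    have : (2:ℝ) ≤ (n:ℝ) := by exact_mod_cast hn
    linarith
  set m : ℝ := (n:ℝ) - 1 with hm_def
  have hm0 : (0:ℝ) < m := by linarith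
  have hm57 : m^5 ≤ m^7 := pow_le_pow_right₀ hm (by norm_num)
  refine ⟨32*(500*m^5 + 4000*m^7) + 32, by positivity, ?_⟩
  set A : ℝ := 32*(500*m^5 + 4000*m^7) + 32 with hA_def
  have hA1 : 1 ≤ A := by
    have h5 : (0:ℝ) < m^5 := by positivity
    have h7 : (0:ℝ) < m^7 := by positivity
    rw [hA_def]; nlinarith
  have hA0 : (0:ℝ) < A := by linarith
  have hA2 : 16000*m^5 ≤ A^2 := by
    have hAA : A ≤ A^2 := by nlinarith
    have h7 : (0:ℝ) < m^7 := by positivity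
    rw [hA_def] at hAA ⊢; nlinarith
  have hA4 : 128000*m^7 ≤ A^4 := by
    have hAA : A ≤ A^4 := by nlinarith [sq_nonneg A, sq_nonneg (A^2 - A), sq_nonneg (A-1)]
    have h5 : (0:ℝ) < m^5 := by positivity
    rw [hA_def] at hAA ⊢; nlinarith
  refine ⟨Real.exp (-(56*m + 56)), ⟨Real.exp_pos _, ?_⟩, ?_⟩
  · rw [← Real.exp_zero]
    exact Real.exp_lt_exp.mpr (by linarith)
  set rstar : ℝ := Real.exp (-(56*m + 56)) with hrs_def
  have hrs1 : rstar < 1 := by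
    rw [hrs_def, ← Real.exp_zero]
    exact Real.exp_lt_exp.mpr (by linarith)
  intro δ hδ
  obtain ⟨hδ1, hδ2⟩ := abs_le.mp hδ
  set a : ℝ := (1 - δ) * m / 4 with ha_def
  have ha0 : 0 < a := by rw [ha_def]; nlinarith
  have ha8 : m/8 ≤ a := by rw [ha_def]; nlinarith
  have ham : a ≤ m := by rw [ha_def]; nlinarith
  refine ⟨1/2, by norm_num, ?_⟩
  intro ε hε0 hε1
  refine ⟨1, one_pos, ?_⟩
  intro r t hrt hrrs ht0 ht1
  set b : ℝ := 1 - ε with hb_def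
  have hb0 : 0 < b := by rw [hb_def]; linarith
  have hb1 : b ≤ 1 := by rw [hb_def]; linarith
  have hr0 : 0 < r := by
    have h1 : 0 < A / Real.sqrt ε * Real.sqrt t := by
      apply mul_pos (div_pos hA0 (Real.sqrt_pos.mpr hε0)) (Real.sqrt_pos.mpr ht0)
    linarith
  have hr1 : r < 1 := lt_of_le_of_lt hrrs hrs1
  have hx0 : 0 < Lam r := Aux2.lam_pos hr0 hr1
  set x : ℝ := Lam r with hx_def
  -- upper bound on x
  have hxb : x ≤ 1/(56*m + 56) := by
    have hlog : Real.log r ≤ Real.log rstar := Real.log_le_log hr0 hrrs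
    have hlrs : Real.log rstar = -(56*m + 56) := by rw [hrs_def, Real.log_exp]
    have hge : 56*m + 56 ≤ -Real.log r := by rw [hlrs] at hlog; linarith
    have hpos : (0:ℝ) < 56*m + 56 := by linarith
    rw [hx_def]
    calc Lam r = 1/(-Real.log r) := rfl
      _ ≤ 1/(56*m + 56) := by
          apply one_div_le_one_div_of_le hpos hge
  have hx56 : x ≤ 1/(56*m) := by
    have : 1/(56*m + 56) ≤ 1/(56*m) := by
      apply one_div_le_one_div_of_le (by positivity) (by linarith)
    linarith
  have hx1 : x ≤ 1 := by
    have : 1/(56*m + 56) ≤ 1 := by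
      rw [div_le_one (by positivity)]; linarith
    linarith
  -- rewrite both sides in closed form
  rw [Aux2.deriv_vOuter_t r t, Aux2.gamma_eq hr0 hr1, Aux2.Fop_vOuter hr0 hr1, ← hm_def, ← hx_def]
  clear_value m A rstar a b x
  -- time-scale bound
  have htA : A^2 * t ≤ ε * r^2 := by
    have hnn : 0 ≤ A / Real.sqrt ε * Real.sqrt t := by positivity
    have hsq := pow_le_pow_left₀ hnn hrt 2
    have hval : (A / Real.sqrt ε * Real.sqrt t)^2 = A^2 * t / ε := by
      rw [mul_pow, div_pow, Real.sq_sqrt hε0.le, Real.sq_sqrt ht0.le]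
      ring
    rw [hval] at hsq
    rw [div_le_iff₀ hε0] at hsq
    linarith [hsq]
  -- bounds
  have hB := Aux2.Btil_bound hm ha0 ham hx0.le hx1
  have hQ := Aux2.Qtil_bound hm ha0 ham hx0.le hx1
  have hPlb := Aux2.Pf_lb hm ha0 ham hx0.le ha8 hx56
  have hBl := (abs_le.mp hB).1
  have hQl := (abs_le.mp hQ).1
  have key : 0 ≤ ε*(Aux2.Pf m a x)*r^4 + (b*t)*(Aux2.Btil m a x)*r^2
      + (b*t)^2*(Aux2.Qtil m a x) :=
    key_ineq hm ha0 ham ha8 hx0 hx1 hA2 hA4 hA0 hε0 (by linarith) hb_def ht0 hr0 htA hBl hQl hPlb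
  have expand : Aux2.Pf m a x/r^2 + (b*t)*(Aux2.Btil m a x/r^4)
      + (b*t)^2*(Aux2.Qtil m a x/r^6) - b*(Aux2.Pf m a x/r^2)
      = (ε*(Aux2.Pf m a x)*r^4 + (b*t)*(Aux2.Btil m a x)*r^2
        + (b*t)^2*(Aux2.Qtil m a x))/r^6 := by
    rw [hb_def]
    field_simp
    ring
  have hfrac : 0 ≤ (ε*(Aux2.Pf m a x)*r^4 + (b*t)*(Aux2.Btil m a x)*r^2
      + (b*t)^2*(Aux2.Qtil m a x))/r^6 := div_nonneg key (by positivity)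
  linarith [expand, hfrac]
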